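/- In the timed modal epistemic logic tS4, from the hypothesis K¹φ, where φ = (E₁ ⊻ E₂) ∧ (E₁ → ⋀_{0≤i<10} ¬Kⁱ E₁) ∧ (E₂ → (⋀_{0≤i<20} ¬Kⁱ E₂ ∧ ⋀_{10<i≤20} Kⁱ ¬E₁)), one can derive ⊥; hence tS4 ⊢ ¬K¹φ. -/

import Mathlib

/-- Formulas of timed modal epistemic logic: `K i A` means "`A` is known at
time `i`". -/
inductive Fm : Type
  | atom : ℕ → Fm
  | bot : Fm
  | imp : Fm → Fm → Fm
  | K : ℕ → Fm → Fm

namespace Fm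

def neg (A : Fm) : Fm := imp A bot
def disj (A B : Fm) : Fm := imp (neg A) B
def conj (A B : Fm) : Fm := neg (imp A (neg B))
/-- Exclusive disjunction. -/
def xor' (A B : Fm) : Fm := conj (disj A B) (neg (conj A B))

/-- Big conjunction of a list of formulas. -/
def bigConj (l : List Fm) : Fm := l.foldr conj (neg bot)

end Fm

open Fm

/-- The teacher's announcement `φ` for the two-day Surprise Test Paradox
(announcement at time 0, Friday class at time 10, Wednesday class at time 20):
exactly one of `E₁`, `E₂` holds; if `E₁` then `¬Kⁱ E₁` for all `0 ≤ i < 10`;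
if `E₂` then `¬Kⁱ E₂` for all `0 ≤ i < 20` and `Kⁱ ¬E₁` for all `10 < i ≤ 20`. -/
def phi (E₁ E₂ : Fm) : Fm :=
  conj (xor' E₁ E₂)
    (conj (imp E₁ (bigConj ((List.range 10).map fun i => neg (K i E₁))))
      (imp E₂ (conj (bigConj ((List.range 20).map fun i => neg (K i E₂)))
        (bigConj ((List.range 10).map fun j => K (j + 11) (neg E₁))))))

/-- Provability in the timed modal epistemic logic tS4: tK (propositional
tautologies, axiom tK, monotonicity Mon, rules MP, DE, E) together with
veracity tT: `Kⁱ A → A` and positive introspection t4: `Kⁱ A → Kʲ Kⁱ A` for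
`i < j`. -/
inductive TS4 : Fm → Prop
  | ax1 (A B : Fm) : TS4 (imp A (imp B A))
  | ax2 (A B C : Fm) : TS4 (imp (imp A (imp B C)) (imp (imp A B) (imp A C)))
  | ax3 (A B : Fm) : TS4 (imp (imp (neg A) (neg B)) (imp B A))
  | tk {i j k : ℕ} (hik : i < k) (hjk : j < k) (A B : Fm) :
      TS4 (imp (K i (imp A B)) (imp (K j A) (K k B)))
  | mon {i j : ℕ} (hij : i < j) (A : Fm) : TS4 (imp (K i A) (K j A))
  | tT (i : ℕ) (A : Fm) : TS4 (imp (K i A) A)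
  | t4 {i j : ℕ} (hij : i < j) (A : Fm) : TS4 (imp (K i A) (K j (K i A)))
  | mp {A B : Fm} : TS4 (imp A B) → TS4 A → TS4 B
  | de {i j : ℕ} (hij : i < j) {A : Fm} :
      TS4 A → TS4 (imp (K i A) (K j (K i A)))
  | e (i : ℕ) {A : Fm} : TS4 A → TS4 (K i A)

/-- Derivability in tS4 from a list of hypotheses. -/
inductive Deriv (Γ : List Fm) : Fm → Prop
  | hyp {A : Fm} : A ∈ Γ → Deriv Γ A
  | thm {A : Fm} : TS4 A → Deriv Γ A
  | mp {A B : Fm} : Deriv Γ (imp A B) → Deriv Γ A → Deriv Γ B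


section Aux

lemma deriv_weaken {Γ Δ : List Fm} {A : Fm} (h : Deriv Γ A)
    (hs : ∀ x ∈ Γ, x ∈ Δ) : Deriv Δ A := by
  induction h with
  | hyp h => exact Deriv.hyp (hs _ h)
  | thm h => exact Deriv.thm h
  | mp _ _ ih1 ih2 => exact Deriv.mp ih1 ih2

lemma ts4_of_deriv_nil {A : Fm} (h : Deriv [] A) : TS4 A := by
  induction h with
  | hyp h => simp at h
  | thm h => exact h
  | mp _ _ ih1 ih2 => exact TS4.mp ih1 ih2

lemma ts4_imp_refl (A : Fm) : TS4 (imp A A) :=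
  TS4.mp (TS4.mp (TS4.ax2 A (imp A A) A) (TS4.ax1 A (imp A A))) (TS4.ax1 A A)

theorem deduction {Γ : List Fm} {A B : Fm} (h : Deriv (A :: Γ) B) :
    Deriv Γ (imp A B) := by
  induction h with
  | hyp h =>
    rcases List.mem_cons.mp h with h | h
    · subst h; exact Deriv.thm (ts4_imp_refl _)
    · exact Deriv.mp (Deriv.thm (TS4.ax1 _ _)) (Deriv.hyp h)
  | thm h => exact Deriv.mp (Deriv.thm (TS4.ax1 _ _)) (Deriv.thm h)
  | mp _ _ ih1 ih2 => exact Deriv.mp (Deriv.mp (Deriv.thm (TS4.ax2 _ _ _)) ih1) ih2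

lemma deriv_trans {Γ : List Fm} {A B C : Fm}
    (h1 : Deriv Γ (imp A B)) (h2 : Deriv Γ (imp B C)) : Deriv Γ (imp A C) :=
  deduction (Deriv.mp (deriv_weaken h2 (fun _ hx => List.mem_cons_of_mem _ hx))
    (Deriv.mp (deriv_weaken h1 (fun _ hx => List.mem_cons_of_mem _ hx))
      (Deriv.hyp List.mem_cons_self)))

lemma ts4_imp_trans {A B C : Fm} (h1 : TS4 (imp A B)) (h2 : TS4 (imp B C)) :
    TS4 (imp A C) :=
  ts4_of_deriv_nil (deriv_trans (Deriv.thm h1) (Deriv.thm h2))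

lemma ts4_efq (A : Fm) : TS4 (imp bot A) :=
  TS4.mp (TS4.ax3 A bot) (TS4.mp (TS4.ax1 (neg bot) (neg A)) (ts4_imp_refl bot))

lemma ts4_apply_neg (A : Fm) : TS4 (imp A (imp (neg A) bot)) :=
  ts4_of_deriv_nil (deduction (deduction
    (Deriv.mp (Deriv.hyp (show neg A ∈ [neg A, A] by simp))
              (Deriv.hyp (show A ∈ [neg A, A] by simp)))))

lemma ts4_dne (A : Fm) : TS4 (imp (neg (neg A)) A) :=
  TS4.mp (TS4.ax3 A (neg (neg A))) (ts4_apply_neg (neg A))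

lemma conj_left' (A B : Fm) : TS4 (imp (conj A B) A) := by
  apply ts4_of_deriv_nil
  apply deduction
  apply Deriv.mp (Deriv.thm (ts4_dne A))
  apply deduction
  -- context: [neg A, conj A B] ⊢ bot
  refine Deriv.mp (Deriv.hyp (show conj A B ∈ _ by simp)) ?_
  -- need : imp A (neg B)
  exact deriv_trans (Deriv.hyp (show neg A ∈ _ by simp)) (Deriv.thm (ts4_efq (neg B)))

lemma conj_right' (A B : Fm) : TS4 (imp (conj A B) B) := by
  apply ts4_of_deriv_nil
  apply deduction
  apply Deriv.mp (Deriv.thm (ts4_dne B))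
  apply deduction
  -- context: [neg B, conj A B] ⊢ bot
  refine Deriv.mp (Deriv.hyp (show conj A B ∈ _ by simp)) ?_
  -- need : imp A (neg B)
  exact Deriv.mp (Deriv.thm (TS4.ax1 (neg B) A)) (Deriv.hyp (show neg B ∈ _ by simp))

lemma bigConj_elem {A : Fm} : ∀ {l : List Fm}, A ∈ l → TS4 (imp (bigConj l) A)
  | h :: t, hm => by
    rcases List.mem_cons.mp hm with h1 | h1
    · subst h1; exact conj_left' A (bigConj t)
    · exact ts4_imp_trans (conj_right' h (bigConj t)) (bigConj_elem h1)

end Aux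

/-- In tS4, the hypothesis `K¹φ` (the student knows the teacher's announcement
at time 1) yields a contradiction; hence tS4 proves `¬K¹φ`. -/
theorem surprise_test_tS4 (E₁ E₂ : Fm) :
    Deriv [K 1 (phi E₁ E₂)] bot ∧ TS4 (neg (K 1 (phi E₁ E₂))) := by
  set φ := phi E₁ E₂ with hφ
  set Γ : List Fm := [K 1 φ] with hΓ
  have dK : Deriv Γ (K 1 φ) := Deriv.hyp (by simp [hΓ])
  have dphi : Deriv Γ φ := Deriv.mp (Deriv.thm (TS4.tT 1 φ)) dK
  have dX : Deriv Γ (xor' E₁ E₂) := Deriv.mp (Deriv.thm (conj_left' _ _)) dphi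
  have ddisj : Deriv Γ (imp (neg E₁) E₂) :=
    Deriv.mp (Deriv.thm (conj_left' (disj E₁ E₂) (neg (conj E₁ E₂)))) dX
  have drest := Deriv.mp (Deriv.thm (conj_right' (xor' E₁ E₂) _)) dphi
  have dC1 : Deriv Γ (imp E₁ (bigConj ((List.range 10).map fun i => neg (K i E₁)))) :=
    Deriv.mp (Deriv.thm (conj_left' _ _)) drest
  have dC2 : Deriv Γ (imp E₂ (conj (bigConj ((List.range 20).map fun i => neg (K i E₂)))
      (bigConj ((List.range 10).map fun j => K (j + 11) (neg E₁))))) :=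
    Deriv.mp (Deriv.thm (conj_right' _ _)) drest
  -- φ → (¬E₁ → E₂) as a theorem
  have t1 : TS4 (imp φ (imp (neg E₁) E₂)) :=
    ts4_imp_trans (conj_left' (xor' E₁ E₂) _)
      (conj_left' (disj E₁ E₂) (neg (conj E₁ E₂)))
  -- From K¹φ: ¬E₂
  have dnegE₂ : Deriv Γ (neg E₂) := by
    apply deduction
    set Γ' : List Fm := E₂ :: Γ with hΓ'
    have dE₂ : Deriv Γ' E₂ := Deriv.hyp (by simp [hΓ'])
    have dK' : Deriv Γ' (K 1 φ) := Deriv.hyp (by simp [hΓ', hΓ])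
    have dL23 := Deriv.mp (deriv_weaken dC2 (fun _ hx => List.mem_cons_of_mem _ hx)) dE₂
    have dL2 := Deriv.mp (Deriv.thm (conj_left' _ _)) dL23
    have dL3 := Deriv.mp (Deriv.thm (conj_right' _ _)) dL23
    have mem1 : K 11 (neg E₁) ∈ (List.range 10).map fun j => K (j + 11) (neg E₁) :=
      List.mem_map.mpr ⟨0, by simp, rfl⟩
    have dK11 : Deriv Γ' (K 11 (neg E₁)) :=
      Deriv.mp (Deriv.thm (bigConj_elem mem1)) dL3
    have mem2 : neg (K 12 E₂) ∈ (List.range 20).map fun i => neg (K i E₂) :=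
      List.mem_map.mpr ⟨12, by simp, rfl⟩
    have dnK12 : Deriv Γ' (neg (K 12 E₂)) :=
      Deriv.mp (Deriv.thm (bigConj_elem mem2)) dL2
    have dK2imp : Deriv Γ' (K 2 (imp (neg E₁) E₂)) :=
      Deriv.mp (Deriv.mp (Deriv.thm (TS4.tk (show 0 < 2 by norm_num)
        (show 1 < 2 by norm_num) φ (imp (neg E₁) E₂))) (Deriv.thm (TS4.e 0 t1))) dK'
    have dK12 : Deriv Γ' (K 12 E₂) :=
      Deriv.mp (Deriv.mp (Deriv.thm (TS4.tk (show 2 < 12 by norm_num)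
        (show 11 < 12 by norm_num) (neg E₁) E₂)) dK2imp) dK11
    exact Deriv.mp dnK12 dK12
  -- From K¹φ: E₁
  have dE₁ : Deriv Γ E₁ :=
    Deriv.mp (Deriv.thm (ts4_dne E₁)) (deriv_trans ddisj dnegE₂)
  have thmE₁ : TS4 (imp (K 1 φ) E₁) := ts4_of_deriv_nil (deduction dE₁)
  -- From K¹φ: K³E₁
  have dK2K1 : Deriv Γ (K 2 (K 1 φ)) :=
    Deriv.mp (Deriv.thm (TS4.t4 (show 1 < 2 by norm_num) φ)) dK
  have dK3E₁ : Deriv Γ (K 3 E₁) :=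
    Deriv.mp (Deriv.mp (Deriv.thm (TS4.tk (show 0 < 3 by norm_num)
      (show 2 < 3 by norm_num) (K 1 φ) E₁)) (Deriv.thm (TS4.e 0 thmE₁))) dK2K1
  have dL1 := Deriv.mp dC1 dE₁
  have mem3 : neg (K 3 E₁) ∈ (List.range 10).map fun i => neg (K i E₁) :=
    List.mem_map.mpr ⟨3, by simp, rfl⟩
  have dnK3 : Deriv Γ (neg (K 3 E₁)) :=
    Deriv.mp (Deriv.thm (bigConj_elem mem3)) dL1
  have dbot : Deriv Γ bot := Deriv.mp dnK3 dK3E₁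
  exact ⟨dbot, ts4_of_deriv_nil (deduction dbot)⟩
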